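/- Let L be a strong model (a model satisfying the strengthened axiom A4*). Then for all X ⊆ L and α < κ, (⨆ X)|_α = ⨆ {x|_α : x ∈ X}. -/

import Mathlib

universe u

/-- in a strong model (A1, A2, A3, A4*, A5, A6), restriction commutes
with arbitrary suprema: (⨆ X)|_α = ⨆ {x|_α : x ∈ X} for all X ⊆ L, α < κ. -/
theorem strong_model_res_sSup
    {κ : Ordinal} (hκ : Order.IsSuccLimit κ) {L : Type u} [CompleteLattice L]
    (r : Ordinal → L → L → Prop)
    (hrefl : ∀ α < κ, ∀ x : L, r α x x)
    (htrans : ∀ α < κ, ∀ x y z : L, r α x y → r α y z → r α x z)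
    (A1 : ∀ α β : Ordinal, α < β → β < κ → ∀ x y : L, r β x y → r α x y ∧ r α y x)
    (A2 : ∀ x y : L, (∀ α < κ, r α x y ∧ r α y x) → x = y)
    (res : Ordinal → L → L)
    (A3 : ∀ α < κ, ∀ x : L, (r α x (res α x) ∧ r α (res α x) x) ∧
        ∀ z : L, r α x z → res α x ≤ z)
    (A4s : ∀ α < κ, ∀ (I : Type u) (xs ys : I → L),
        (∀ i, r α (xs i) (ys i) ∧ r α (ys i) (xs i)) →
        r α (⨆ i, xs i) (⨆ i, ys i) ∧ r α (⨆ i, ys i) (⨆ i, xs i))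
    (A5 : ∀ α < κ, ∀ x y : L, x ≤ y → res α x ≤ res α y)
    (A6 : ∀ α < κ, ∀ x y : L, x ≤ y → (∀ β < α, r β x y ∧ r β y x) → r α x y) :
    ∀ (X : Set L), ∀ α < κ, res α (sSup X) = sSup ((fun x => res α x) '' X) := by
  intro X α hα
  apply le_antisymm
  · -- res α (sSup X) ≤ sSup (res α '' X)
    have hsup : sSup X = ⨆ x : X, (x : L) := (sSup_eq_iSup' (s := X))
    have himg : sSup ((fun x => res α x) '' X) = ⨆ x : X, res α (x : L) := by
      rw [sSup_image]
      exact (iSup_subtype'' X fun x => res α x).symm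
    have h4 := A4s α hα X (fun x : X => (x : L)) (fun x : X => res α (x : L))
      (fun i => (A3 α hα (i : L)).1)
    rw [hsup, himg]
    exact ((A3 α hα (⨆ x : X, (x : L))).2) _ h4.1
  · -- each res α x ≤ res α (sSup X) by A5
    apply sSup_le
    rintro y ⟨x, hx, rfl⟩
    exact A5 α hα x (sSup X) (le_sSup hx)
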